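/- Let f(X_t) = h(t, f₁(X_t), …, f_k(X_t)) where h: ℝ₊ × ℝᵏ → ℝ is twice continuously differentiable and each f_i admits both iterated functional derivatives Δ_t Δ_x f_i and Δ_x Δ_t f_i. Then the Lie bracket satisfies the chain rule 𝔏f(X_t) = Σ_{i=1}^{k} ∂h/∂x_i (t, f₁(X_t), …, f_k(X_t)) · 𝔏f_i(X_t). -/

import Mathlib

open Filter Topology MeasureTheory

noncomputable section

/-- Flat extension of a path `Y` at time `t`: constant equal to `Y t` after `t`. -/
def flatExt (t : ℝ) (Y : ℝ → ℝ) : ℝ → ℝ := fun u => if u ≤ t then Y u else Y t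

/-- Bumped path: the value at the current time `t` is shifted by `h`. -/
def bump (t h : ℝ) (Y : ℝ → ℝ) : ℝ → ℝ := fun u => if u = t then Y t + h else Y u

/-- Dupire time functional derivative `Δ_t f (Y_t) = v`. -/
def HasTimeDeriv (f : ℝ → (ℝ → ℝ) → ℝ) (t : ℝ) (Y : ℝ → ℝ) (v : ℝ) : Prop :=
  Tendsto (fun δ : ℝ => (f (t + δ) (flatExt t Y) - f t Y) / δ) (𝓝[>] 0) (𝓝 v)

/-- Dupire space functional derivative `Δ_x f (Y_t) = v`. -/
def HasSpaceDeriv (f : ℝ → (ℝ → ℝ) → ℝ) (t : ℝ) (Y : ℝ → ℝ) (v : ℝ) : Prop :=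
  Tendsto (fun h : ℝ => (f t (bump t h Y) - f t Y) / h) (𝓝[≠] 0) (𝓝 v)

/-- Decomposition of a vector of `ℝ × (Fin k → ℝ)` in the canonical basis. -/
lemma vec_decomp (k : ℕ) (a : ℝ) (c : Fin k → ℝ) :
    ((a, c) : ℝ × (Fin k → ℝ)) = a • (1, 0) + ∑ i, c i • ((0, Pi.single i 1) : ℝ × (Fin k → ℝ)) := by
  rw [Prod.ext_iff]
  refine ⟨by simp [Prod.fst_sum], ?_⟩
  simp only [Prod.snd_add, Prod.snd_sum, Prod.smul_snd, smul_zero]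
  funext j
  simp [Finset.sum_apply, Pi.single_apply, mul_comm]

lemma clm_decomp (k : ℕ) (L : (ℝ × (Fin k → ℝ)) →L[ℝ] ℝ) (a : ℝ) (c : Fin k → ℝ) :
    L (a, c) = a * L (1, 0) + ∑ i, c i * L (0, Pi.single i 1) := by
  conv_lhs => rw [vec_decomp k a c]
  rw [map_add, map_sum, _root_.map_smul, smul_eq_mul]
  congr 1
  exact Finset.sum_congr rfl fun i _ => by rw [_root_.map_smul, smul_eq_mul]

theorem statement3 (k : ℕ) (t : ℝ) (Y : ℝ → ℝ)
    (h : ℝ × (Fin k → ℝ) → ℝ) (hh : ContDiff ℝ 2 h)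
    (F Ft Fx : Fin k → ℝ → (ℝ → ℝ) → ℝ)
    (hFt : ∀ i s Z, HasTimeDeriv (F i) s Z (Ft i s Z))
    (hFx : ∀ i s Z, HasSpaceDeriv (F i) s Z (Fx i s Z))
    (A B : Fin k → ℝ)
    (hA : ∀ i, HasTimeDeriv (Fx i) t Y (A i))   -- Δ_t Δ_x fᵢ (Y_t)
    (hB : ∀ i, HasSpaceDeriv (Ft i) t Y (B i))  -- Δ_x Δ_t fᵢ (Y_t)
    (hadapt : ∀ i (s : ℝ) (Z W : ℝ → ℝ), (∀ u, u ≤ s → Z u = W u) →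
      F i s Z = F i s W ∧ Ft i s Z = Ft i s W ∧ Fx i s Z = Fx i s W) :
    ∃ v w : ℝ,
      -- `Δ_x (Δ_t f) (Y_t) = v`:
      HasSpaceDeriv (fun s Z => fderiv ℝ h (s, fun i => F i s Z) (1, 0)
          + ∑ i, fderiv ℝ h (s, fun i => F i s Z) (0, Pi.single i 1) * Ft i s Z) t Y v ∧
      -- `Δ_t (Δ_x f) (Y_t) = w`:
      HasTimeDeriv (fun s Z =>
          ∑ i, fderiv ℝ h (s, fun i => F i s Z) (0, Pi.single i 1) * Fx i s Z) t Y w ∧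
      -- the chain rule for the Lie bracket:
      v - w = ∑ i, fderiv ℝ h (t, fun i => F i t Y) (0, Pi.single i 1) * (B i - A i) := by
  classical
  -- basic path facts
  have hbump0 : bump t 0 Y = Y := by
    funext u; by_cases hu : u = t <;> simp [bump, hu]
  have hflat : ∀ u, u ≤ t → flatExt t Y u = Y u := fun u hu => by simp [flatExt, hu]
  have hFflat : ∀ i, F i t (flatExt t Y) = F i t Y := fun i => (hadapt i t _ _ hflat).1
  have hFtflat : ∀ i, Ft i t (flatExt t Y) = Ft i t Y := fun i => (hadapt i t _ _ hflat).2.1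
  have hFxflat : ∀ i, Fx i t (flatExt t Y) = Fx i t Y := fun i => (hadapt i t _ _ hflat).2.2
  -- notation
  set p0 : ℝ × (Fin k → ℝ) := (t, fun i => F i t Y) with hp0
  set D2 : (ℝ × (Fin k → ℝ)) →L[ℝ] (ℝ × (Fin k → ℝ)) →L[ℝ] ℝ :=
    fderiv ℝ (fderiv ℝ h) p0 with hD2
  set dX : ℝ × (Fin k → ℝ) := (0, fun i => Fx i t Y) with hdX
  set dT : ℝ × (Fin k → ℝ) := (1, fun i => Ft i t Y) with hdT
  -- smoothness of fderiv
  have hφ : ContDiff ℝ 1 (fderiv ℝ h) := hh.fderiv_right (by norm_num)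
  have hφd : HasFDerivAt (fderiv ℝ h) D2 p0 :=
    (hφ.differentiable one_ne_zero p0).hasFDerivAt
  have happly : ∀ u : ℝ × (Fin k → ℝ),
      HasFDerivAt (fun x => fderiv ℝ h x u)
        ((ContinuousLinearMap.apply ℝ ℝ u).comp D2) p0 :=
    fun u => (ContinuousLinearMap.apply ℝ ℝ u).hasFDerivAt.comp p0 hφd
  have hsymm : IsSymmSndFDerivAt ℝ h p0 := hh.contDiffAt.isSymmSndFDerivAt (by norm_num)
  ------------------------------------------------------------------
  -- SPACE part
  ------------------------------------------------------------------
  have hgF : ∀ i, HasDerivAt (fun s => F i t (bump t s Y)) (Fx i t Y) 0 := by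
    intro i
    rw [hasDerivAt_iff_tendsto_slope]
    have := hFx i t Y
    unfold HasSpaceDeriv at this
    refine this.congr fun s => ?_
    simp [slope_def_field, hbump0]
  have hgFt : ∀ i, HasDerivAt (fun s => Ft i t (bump t s Y)) (B i) 0 := by
    intro i
    rw [hasDerivAt_iff_tendsto_slope]
    have := hB i
    unfold HasSpaceDeriv at this
    refine this.congr fun s => ?_
    simp [slope_def_field, hbump0]
  have hg : HasDerivAt
      (fun s => ((t, fun i => F i t (bump t s Y)) : ℝ × (Fin k → ℝ))) dX 0 :=
    (hasDerivAt_const 0 t).prodMk (hasDerivAt_pi.2 hgF)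
  have hg0 : ((t, fun i => F i t (bump t 0 Y)) : ℝ × (Fin k → ℝ)) = p0 := by
    rw [hbump0]
  have heval : ∀ u : ℝ × (Fin k → ℝ),
      HasDerivAt (fun s => fderiv ℝ h (t, fun i => F i t (bump t s Y)) u) (D2 dX u) 0 := by
    intro u
    have h1 : HasFDerivAt (fun x => fderiv ℝ h x u)
        ((ContinuousLinearMap.apply ℝ ℝ u).comp D2)
        ((t, fun i => F i t (bump t 0 Y)) : ℝ × (Fin k → ℝ)) := hg0 ▸ happly u
    have := h1.comp_hasDerivAt 0 hg
    simpa [Function.comp_def] using this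
  set v : ℝ := D2 dX (1, 0) + ∑ i, D2 dX (0, Pi.single i 1) * Ft i t Y
      + ∑ i, fderiv ℝ h p0 (0, Pi.single i 1) * B i with hv
  have hG : HasDerivAt (fun s => fderiv ℝ h (t, fun i => F i t (bump t s Y)) (1, 0)
      + ∑ i, fderiv ℝ h (t, fun i => F i t (bump t s Y)) (0, Pi.single i 1)
          * Ft i t (bump t s Y)) v 0 := by
    have h2 : HasDerivAt (fun s => ∑ i,
        fderiv ℝ h (t, fun i => F i t (bump t s Y)) (0, Pi.single i 1) * Ft i t (bump t s Y))
        (∑ i, (D2 dX (0, Pi.single i 1) * Ft i t Y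
          + fderiv ℝ h p0 (0, Pi.single i 1) * B i)) 0 := by
      refine HasDerivAt.fun_sum fun i _ => ?_
      have := (heval (0, Pi.single i 1)).mul (hgFt i)
      simpa [hbump0, hp0, Pi.mul_def] using this
    have := (heval (1, 0)).add h2
    rw [hv]
    rw [Finset.sum_add_distrib] at this
    simpa [add_assoc, Pi.add_def] using this
  have hvfinal : HasSpaceDeriv (fun s Z => fderiv ℝ h (s, fun i => F i s Z) (1, 0)
      + ∑ i, fderiv ℝ h (s, fun i => F i s Z) (0, Pi.single i 1) * Ft i s Z) t Y v := by
    have := hasDerivAt_iff_tendsto_slope.1 hG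
    unfold HasSpaceDeriv
    refine this.congr fun s => ?_
    simp [slope_def_field, hbump0]
  ------------------------------------------------------------------
  -- TIME part
  ------------------------------------------------------------------
  have hIoi : 𝓝[Set.Ici (0:ℝ) \ {0}] (0:ℝ) = 𝓝[>] (0:ℝ) := by
    rw [Set.Ici_sdiff_left]
  have hcF : ∀ i, HasDerivWithinAt (fun δ => F i (t + δ) (flatExt t Y)) (Ft i t Y)
      (Set.Ici 0) 0 := by
    intro i
    rw [hasDerivWithinAt_iff_tendsto_slope, hIoi]
    have := hFt i t Y
    unfold HasTimeDeriv at this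
    refine this.congr fun δ => ?_
    simp [slope_def_field, hFflat i]
  have hcFx : ∀ i, HasDerivWithinAt (fun δ => Fx i (t + δ) (flatExt t Y)) (A i)
      (Set.Ici 0) 0 := by
    intro i
    rw [hasDerivWithinAt_iff_tendsto_slope, hIoi]
    have := hA i
    unfold HasTimeDeriv at this
    refine this.congr fun δ => ?_
    simp [slope_def_field, hFxflat i]
  have hc : HasDerivWithinAt
      (fun δ => ((t + δ, fun i => F i (t + δ) (flatExt t Y)) : ℝ × (Fin k → ℝ))) dT
      (Set.Ici 0) 0 := by
    refine HasDerivWithinAt.prodMk ?_ (hasDerivWithinAt_pi.2 hcF)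
    simpa using ((hasDerivAt_id (0:ℝ)).const_add t).hasDerivWithinAt
  have hc0 : ((t + 0, fun i => F i (t + 0) (flatExt t Y)) : ℝ × (Fin k → ℝ)) = p0 := by
    rw [hp0, add_zero]
    exact congrArg (Prod.mk t) (funext hFflat)
  have heval2 : ∀ u : ℝ × (Fin k → ℝ),
      HasDerivWithinAt (fun δ => fderiv ℝ h (t + δ, fun i => F i (t + δ) (flatExt t Y)) u)
        (D2 dT u) (Set.Ici 0) 0 := by
    intro u
    have h1 : HasFDerivAt (fun x => fderiv ℝ h x u)
        ((ContinuousLinearMap.apply ℝ ℝ u).comp D2)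
        ((t + 0, fun i => F i (t + 0) (flatExt t Y)) : ℝ × (Fin k → ℝ)) := hc0 ▸ happly u
    have := h1.comp_hasDerivWithinAt 0 hc
    simpa [Function.comp_def] using this
  set w : ℝ := ∑ i, D2 dT (0, Pi.single i 1) * Fx i t Y
      + ∑ i, fderiv ℝ h p0 (0, Pi.single i 1) * A i with hw
  have hG2 : HasDerivWithinAt (fun δ => ∑ i,
      fderiv ℝ h (t + δ, fun i => F i (t + δ) (flatExt t Y)) (0, Pi.single i 1)
        * Fx i (t + δ) (flatExt t Y)) w (Set.Ici 0) 0 := by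
    have h2 : HasDerivWithinAt (fun δ => ∑ i,
        fderiv ℝ h (t + δ, fun i => F i (t + δ) (flatExt t Y)) (0, Pi.single i 1)
          * Fx i (t + δ) (flatExt t Y))
        (∑ i, (D2 dT (0, Pi.single i 1) * Fx i t Y
          + fderiv ℝ h p0 (0, Pi.single i 1) * A i)) (Set.Ici 0) 0 := by
      refine HasDerivWithinAt.fun_sum fun i _ => ?_
      have := (heval2 (0, Pi.single i 1)).mul (hcFx i)
      simpa [hp0, hFflat, hFxflat, Pi.mul_def] using this
    rw [hw, ← Finset.sum_add_distrib]
    exact h2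
  have hwfinal : HasTimeDeriv (fun s Z =>
      ∑ i, fderiv ℝ h (s, fun i => F i s Z) (0, Pi.single i 1) * Fx i s Z) t Y w := by
    have := hasDerivWithinAt_iff_tendsto_slope.1 hG2
    rw [hIoi] at this
    unfold HasTimeDeriv
    refine this.congr fun δ => ?_
    simp [slope_def_field, hc0, hFflat, hFxflat, hp0]
  ------------------------------------------------------------------
  -- algebra
  ------------------------------------------------------------------
  refine ⟨v, w, hvfinal, hwfinal, ?_⟩
  have e1 : D2 dX (1, 0) + ∑ i, D2 dX (0, Pi.single i 1) * Ft i t Y = D2 dX dT := by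
    rw [hdT, clm_decomp k (D2 dX) 1 (fun i => Ft i t Y)]
    simp [mul_comm]
  have e2 : ∑ i, D2 dT (0, Pi.single i 1) * Fx i t Y = D2 dT dX := by
    rw [hdX, clm_decomp k (D2 dT) 0 (fun i => Fx i t Y)]
    simp [mul_comm]
  have e3 : D2 dX dT = D2 dT dX := hsymm dX dT
  rw [hv, hw]
  have : D2 dX (1, 0) + ∑ i, D2 dX (0, Pi.single i 1) * Ft i t Y
      - ∑ i, D2 dT (0, Pi.single i 1) * Fx i t Y = 0 := by
    rw [e1, e2, e3, sub_self]
  calc D2 dX (1, 0) + ∑ i, D2 dX (0, Pi.single i 1) * Ft i t Y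
        + ∑ i, fderiv ℝ h p0 (0, Pi.single i 1) * B i
      - (∑ i, D2 dT (0, Pi.single i 1) * Fx i t Y
        + ∑ i, fderiv ℝ h p0 (0, Pi.single i 1) * A i)
      = (D2 dX (1, 0) + ∑ i, D2 dX (0, Pi.single i 1) * Ft i t Y
          - ∑ i, D2 dT (0, Pi.single i 1) * Fx i t Y)
        + (∑ i, fderiv ℝ h p0 (0, Pi.single i 1) * B i
          - ∑ i, fderiv ℝ h p0 (0, Pi.single i 1) * A i) := by ring
    _ = ∑ i, fderiv ℝ h p0 (0, Pi.single i 1) * (B i - A i) := by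
        rw [this, zero_add, ← Finset.sum_sub_distrib]
        exact Finset.sum_congr rfl fun i _ => by ring
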